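/- Let (G,N) be a pair of finite groups and K a normal subgroup of G contained in N. Then d(M^{(c)}(G,N)) ≤ d(M^{(c)}(G/K, N/K)) + d(M^{(c)}(G,K)), where d(X) is the minimal number of generators of the group X. -/

import Mathlib

open Subgroup

/-- `itComm X Y c` is the `c`-fold iterated commutator subgroup
`[X,_c Y] = ⁅…⁅⁅X,Y⁆,Y⁆,…,Y⁆` (with `c` copies of `Y`); `itComm X Y 0 = X`. -/
def itComm {P : Type*} [Group P] (X Y : Subgroup P) : ℕ → Subgroup P
  | 0 => X
  | c + 1 => ⁅itComm X Y c, Y⁆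

instance itComm_normal {P : Type*} [Group P] (X Y : Subgroup P) [hX : X.Normal] [hY : Y.Normal]
    (c : ℕ) : (itComm X Y c).Normal := by
  induction c with
  | zero => exact hX
  | succ c ih => exact Subgroup.commutator_normal _ _

/-- The abelianization of a group, written additively. -/
abbrev AbOf (A : Type) [Group A] : Type := Additive (Abelianization A)

/-- Iterated tensor product `M ⊗ B ⊗ ⋯ ⊗ B` (with `c` factors `B`) of `ℤ`-modules. -/
noncomputable def iterTensor (M B : ModuleCat ℤ) : ℕ → ModuleCat ℤ
  | 0 => M
  | c + 1 => ModuleCat.of ℤ (TensorProduct ℤ (iterTensor M B c) B)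

/-- `⊗^{c+1}(A, B) = A^{ab} ⊗_ℤ B^{ab} ⊗_ℤ ⋯ ⊗_ℤ B^{ab}` with `c` factors `B^{ab}`. -/
noncomputable def tensorPair (A B : Type) [Group A] [Group B] (c : ℕ) : ModuleCat ℤ :=
  iterTensor (ModuleCat.of ℤ (AbOf A)) (ModuleCat.of ℤ (AbOf B)) c

/-- `M^{(c)}(G,N) = (R ∩ [S,_c F]) / [R,_c F]`, where `R = ker π` and `S = π⁻¹(N)`,
relative to the free presentation `π : F ↠ G`. -/
def McPair {F G : Type} [Group F] [Group G] (π : F →* G) (N : Subgroup G) (c : ℕ) : Type :=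
  (π.ker ⊓ itComm (N.comap π) ⊤ c : Subgroup F) ⧸
    (itComm π.ker ⊤ c).subgroupOf (π.ker ⊓ itComm (N.comap π) ⊤ c)

noncomputable instance {F G : Type} [Group F] [Group G] (π : F →* G) (N : Subgroup G) (c : ℕ) :
    Group (McPair π N c) :=
  inferInstanceAs (Group ((π.ker ⊓ itComm (N.comap π) ⊤ c : Subgroup F) ⧸
    (itComm π.ker ⊤ c).subgroupOf (π.ker ⊓ itComm (N.comap π) ⊤ c)))

/-- `M^{(c)}(G/K, N/K) = (T ∩ [S,_c F]) / [T,_c F]`, where `T = π⁻¹(K)` and `S = π⁻¹(N)`,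
relative to the free presentation `π : F ↠ G`. -/
def McPairQuot {F G : Type} [Group F] [Group G] (π : F →* G) (N K : Subgroup G) (c : ℕ) :
    Type :=
  (K.comap π ⊓ itComm (N.comap π) ⊤ c : Subgroup F) ⧸
    (itComm (K.comap π) ⊤ c).subgroupOf (K.comap π ⊓ itComm (N.comap π) ⊤ c)

noncomputable instance {F G : Type} [Group F] [Group G] (π : F →* G) (N K : Subgroup G)
    [K.Normal] (c : ℕ) : Group (McPairQuot π N K c) :=
  inferInstanceAs (Group ((K.comap π ⊓ itComm (N.comap π) ⊤ c : Subgroup F) ⧸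
    (itComm (K.comap π) ⊤ c).subgroupOf (K.comap π ⊓ itComm (N.comap π) ⊤ c)))

/-- Minimal number of generators of a group. -/
noncomputable def dGen (X : Type*) [Group X] : ℕ :=
  sInf {n | ∃ s : Finset X, s.card = n ∧ Subgroup.closure (s : Set X) = ⊤}

/-- Minimal number of generators of an additive group. -/
noncomputable def dGenAdd (X : Type*) [AddGroup X] : ℕ :=
  sInf {n | ∃ s : Finset X, s.card = n ∧ AddSubgroup.closure (s : Set X) = ⊤}

/-- `M^{(c)}(G,K) = (R ∩ [T,_c F]) / [R,_c F]`, where `R = ker π` and `T = π⁻¹(K)`,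
relative to the free presentation `π : F ↠ G`. -/
def McPairSub {F G : Type} [Group F] [Group G] (π : F →* G) (K : Subgroup G) (c : ℕ) : Type :=
  (π.ker ⊓ itComm (K.comap π) ⊤ c : Subgroup F) ⧸
    (itComm π.ker ⊤ c).subgroupOf (π.ker ⊓ itComm (K.comap π) ⊤ c)

noncomputable instance {F G : Type} [Group F] [Group G] (π : F →* G) (K : Subgroup G) (c : ℕ) :
    Group (McPairSub π K c) :=
  inferInstanceAs (Group ((π.ker ⊓ itComm (K.comap π) ⊤ c : Subgroup F) ⧸
    (itComm π.ker ⊤ c).subgroupOf (π.ker ⊓ itComm (K.comap π) ⊤ c)))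

section AuxLemmas

variable {P : Type*} [Group P]

@[simp] theorem itComm_zero (X Y : Subgroup P) : itComm X Y 0 = X := rfl

@[simp] theorem itComm_succ (X Y : Subgroup P) (c : ℕ) :
    itComm X Y (c + 1) = ⁅itComm X Y c, Y⁆ := rfl

theorem itComm_mono {X X' Y : Subgroup P} (h : X ≤ X') (c : ℕ) :
    itComm X Y c ≤ itComm X' Y c := by
  induction c with
  | zero => exact h
  | succ c ih => exact Subgroup.commutator_mono ih le_rfl

/-- The three subgroups lemma for normal subgroups. -/
theorem three_subgroups (X Y Z : Subgroup P) [X.Normal] [Y.Normal] [Z.Normal] :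
    ⁅⁅X, Y⁆, Z⁆ ≤ ⁅⁅Y, Z⁆, X⁆ ⊔ ⁅⁅Z, X⁆, Y⁆ := by
  set W : Subgroup P := ⁅⁅Y, Z⁆, X⁆ ⊔ ⁅⁅Z, X⁆, Y⁆ with hW
  haveI : W.Normal := Subgroup.sup_normal _ _
  have h1 : Subgroup.map (QuotientGroup.mk' W) ⁅⁅Y, Z⁆, X⁆ = ⊥ := by
    rw [Subgroup.map_eq_bot_iff, QuotientGroup.ker_mk']
    exact le_sup_left
  have h2 : Subgroup.map (QuotientGroup.mk' W) ⁅⁅Z, X⁆, Y⁆ = ⊥ := by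
    rw [Subgroup.map_eq_bot_iff, QuotientGroup.ker_mk']
    exact le_sup_right
  rw [Subgroup.map_commutator, Subgroup.map_commutator] at h1 h2
  have h3 := Subgroup.commutator_commutator_eq_bot_of_rotate h1 h2
  rw [← Subgroup.map_commutator, ← Subgroup.map_commutator, Subgroup.map_eq_bot_iff,
    QuotientGroup.ker_mk'] at h3
  exact h3

theorem itComm_commutator_le (T S : Subgroup P) [T.Normal] [S.Normal] (b : ℕ) :
    ∀ a : ℕ, ⁅itComm T ⊤ a, itComm S ⊤ b⁆ ≤ itComm T ⊤ (a + b) := by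
  induction b with
  | zero =>
    intro a
    simpa using Subgroup.commutator_le_left (itComm T ⊤ a) S
  | succ b ih =>
    intro a
    calc ⁅itComm T ⊤ a, itComm S ⊤ (b + 1)⁆
        = ⁅⁅itComm S ⊤ b, ⊤⁆, itComm T ⊤ a⁆ := by
          rw [itComm_succ, Subgroup.commutator_comm]
      _ ≤ ⁅⁅(⊤ : Subgroup P), itComm T ⊤ a⁆, itComm S ⊤ b⁆ ⊔
            ⁅⁅itComm T ⊤ a, itComm S ⊤ b⁆, ⊤⁆ := three_subgroups _ _ _
      _ ≤ itComm T ⊤ (a + (b + 1)) := by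
          apply sup_le
          · have e : ⁅(⊤ : Subgroup P), itComm T ⊤ a⁆ = itComm T ⊤ (a + 1) := by
              rw [Subgroup.commutator_comm, itComm_succ]
            rw [e]
            have := ih (a + 1)
            have harith : a + 1 + b = a + (b + 1) := by omega
            rwa [harith] at this
          · have h1 : ⁅⁅itComm T ⊤ a, itComm S ⊤ b⁆, (⊤ : Subgroup P)⁆ ≤
                ⁅itComm T ⊤ (a + b), (⊤ : Subgroup P)⁆ :=
              Subgroup.commutator_mono (ih a) le_rfl
            have h2 : ⁅itComm T ⊤ (a + b), (⊤ : Subgroup P)⁆ = itComm T ⊤ (a + b + 1) := rfl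
            rw [h2] at h1
            have harith : a + b + 1 = a + (b + 1) := by omega
            rwa [harith] at h1

end AuxLemmas



theorem aux_cancel {C : Type*} [CommGroup C] (u z w : C) : u * z * (u * w)⁻¹ = z * w⁻¹ := by
  rw [mul_inv_rev, mul_comm w⁻¹ u⁻¹, mul_comm u z, mul_assoc, mul_inv_cancel_left]

theorem dGen_le {X : Type*} [Group X] (s : Finset X)
    (h : Subgroup.closure (s : Set X) = ⊤) : dGen X ≤ s.card :=
  Nat.sInf_le ⟨s, rfl, h⟩

theorem dGen_eq_zero_of_no_gen {X : Type*} [Group X]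
    (h : ¬ ∃ s : Finset X, Subgroup.closure (s : Set X) = ⊤) : dGen X = 0 := by
  unfold dGen
  convert Nat.sInf_empty
  rw [Set.eq_empty_iff_forall_notMem]
  rintro n ⟨s, -, hs⟩
  exact h ⟨s, hs⟩

theorem exists_gen_finset (X : Type*) [Group X]
    (h : ∃ s : Finset X, Subgroup.closure (s : Set X) = ⊤) :
    ∃ s : Finset X, s.card = dGen X ∧ Subgroup.closure (s : Set X) = ⊤ := by
  obtain ⟨s, hs⟩ := h
  have hne : {n | ∃ s : Finset X, s.card = n ∧ Subgroup.closure (s : Set X) = ⊤}.Nonempty :=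
    ⟨s.card, s, rfl, hs⟩
  obtain ⟨t, ht, hts⟩ := Nat.sInf_mem hne
  exact ⟨t, ht, hts⟩

theorem closure_image_top {X Y : Type*} [Group X] [Group Y] [DecidableEq Y] (f : X →* Y)
    (hf : Function.Surjective f) (s : Finset X) (hs : Subgroup.closure (s : Set X) = ⊤) :
    Subgroup.closure ((s.image f : Finset Y) : Set Y) = ⊤ := by
  classical
  rw [Finset.coe_image, ← MonoidHom.map_closure, hs, Subgroup.map_top_of_surjective _ hf]

theorem dGen_eq_of_mulEquiv {X Y : Type*} [Group X] [Group Y] (e : X ≃* Y) :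
    dGen X = dGen Y := by
  classical
  unfold dGen
  congr 1
  ext n
  constructor
  · rintro ⟨s, rfl, hs⟩
    exact ⟨s.image e, Finset.card_image_of_injective _ e.injective,
      closure_image_top e.toMonoidHom e.surjective s hs⟩
  · rintro ⟨s, rfl, hs⟩
    exact ⟨s.image e.symm, Finset.card_image_of_injective _ e.symm.injective,
      closure_image_top e.symm.toMonoidHom e.symm.surjective s hs⟩

/-- In an abelian group, a subgroup of a subgroup generated by a finite set is generated
by at most as many elements. -/
theorem exists_finset_closure_eq_of_le_closure {C : Type*} [CommGroup C] (s : Finset C) :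
    ∀ H : Subgroup C, H ≤ Subgroup.closure (s : Set C) →
      ∃ t : Finset C, t.card ≤ s.card ∧ Subgroup.closure (t : Set C) = H := by
  classical
  induction s using Finset.induction_on with
  | empty =>
    intro H hH
    refine ⟨∅, le_rfl, ?_⟩
    simp only [Finset.coe_empty, Subgroup.closure_empty]
    simp only [Finset.coe_empty, Subgroup.closure_empty] at hH
    exact (le_bot_iff.mp hH).symm
  | @insert a s' ha ih =>
    intro H hH
    set D := Subgroup.closure (s' : Set C) with hD
    obtain ⟨t', ht'c, ht'⟩ := ih (H ⊓ D) inf_le_right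
    let E : AddSubgroup ℤ :=
      { carrier := {k : ℤ | ∃ h ∈ H, ∃ d ∈ D, a ^ k * d = h}
        zero_mem' := ⟨1, one_mem H, 1, one_mem D, by simp⟩
        add_mem' := by
          rintro k l ⟨h, hh, d, hd, rfl⟩ ⟨h', hh', d', hd', rfl⟩
          refine ⟨_, mul_mem hh hh', d * d', mul_mem hd hd', ?_⟩
          rw [zpow_add]
          exact mul_mul_mul_comm _ _ _ _
        neg_mem' := by
          rintro k ⟨h, hh, d, hd, rfl⟩
          refine ⟨(a ^ k * d)⁻¹, inv_mem hh, d⁻¹, inv_mem hd, ?_⟩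
          rw [zpow_neg, mul_inv_rev, mul_comm] }
    obtain ⟨k₀, hk₀⟩ := Int.subgroup_cyclic E
    have hk₀E : k₀ ∈ E := by
      rw [hk₀]
      exact AddSubgroup.subset_closure rfl
    obtain ⟨h₀, hh₀H, d₀, hd₀D, hh₀⟩ := hk₀E
    refine ⟨insert h₀ t', ?_, ?_⟩
    · calc (insert h₀ t').card ≤ t'.card + 1 := Finset.card_insert_le _ _
        _ ≤ s'.card + 1 := by omega
        _ = (insert a s').card := (Finset.card_insert_of_notMem ha).symm
    · apply le_antisymm
      · rw [Subgroup.closure_le]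
        intro x hx
        rcases Finset.mem_insert.mp (Finset.mem_coe.mp hx) with rfl | hx'
        · exact hh₀H
        · have hx'' : x ∈ Subgroup.closure (t' : Set C) :=
            Subgroup.subset_closure (Finset.mem_coe.mpr hx')
          rw [ht'] at hx''
          exact hx''.1
      · intro h hh
        have hmem : h ∈ Subgroup.closure ({a} ∪ (s' : Set C)) := by
          have := hH hh
          rwa [Finset.coe_insert, ← Set.singleton_union] at this
        rw [Subgroup.closure_union, Subgroup.mem_sup] at hmem
        obtain ⟨y, hy, z, hz, rfl⟩ := hmem
        rw [Subgroup.mem_closure_singleton] at hy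
        obtain ⟨k, rfl⟩ := hy
        have hkE : k ∈ E := ⟨a ^ k * z, hh, z, hz, rfl⟩
        rw [hk₀, AddSubgroup.mem_closure_singleton] at hkE
        obtain ⟨m, rfl⟩ := hkE
        rw [smul_eq_mul] at hh ⊢
        have hsplit : h₀ ^ m = a ^ (m * k₀) * d₀ ^ m := by
          rw [← hh₀, mul_zpow, ← zpow_mul, mul_comm k₀ m]
        have key : a ^ (m * k₀) * z * (h₀ ^ m)⁻¹ ∈ H ⊓ D := by
          refine Subgroup.mem_inf.mpr ⟨?_, ?_⟩
          · exact mul_mem hh (inv_mem (zpow_mem hh₀H m))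
          · rw [hsplit, aux_cancel]
            exact mul_mem hz (inv_mem (zpow_mem hd₀D m))
        rw [← ht'] at key
        have keymem : a ^ (m * k₀) * z * (h₀ ^ m)⁻¹ ∈
            Subgroup.closure ((insert h₀ t' : Finset C) : Set C) := by
          refine Subgroup.closure_mono ?_ key
          rw [Finset.coe_insert]
          exact Set.subset_insert _ _
        have h₀mem : h₀ ∈ Subgroup.closure ((insert h₀ t' : Finset C) : Set C) :=
          Subgroup.subset_closure (by simp)
        have : a ^ (m * k₀) * z = (a ^ (m * k₀) * z * (h₀ ^ m)⁻¹) * h₀ ^ m :=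
          (inv_mul_cancel_right _ _).symm
        rw [this]
        exact mul_mem keymem (zpow_mem h₀mem m)





/-- From a finite set of an ambient group generating a subgroup `H`, produce a finite
subset of `↥H` generating `H`. -/
theorem subgroup_gen_of_closure {C : Type*} [Group C] {H : Subgroup C} {t : Finset C}
    (ht : Subgroup.closure (t : Set C) = H) :
    ∃ t' : Finset ↥H, t'.card ≤ t.card ∧ Subgroup.closure (t' : Set ↥H) = ⊤ := by
  classical
  have hsub : ∀ x ∈ t, x ∈ H := fun x hx => ht ▸ Subgroup.subset_closure hx
  have hinj : Function.Injective (fun x : {x // x ∈ t} => (⟨x.1, hsub x.1 x.2⟩ : ↥H)) := by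
    intro u v huv
    beta_reduce at huv
    exact Subtype.ext (Subtype.mk_eq_mk.mp huv)
  refine ⟨t.attach.map ⟨_, hinj⟩, ?_, ?_⟩
  · rw [Finset.card_map, Finset.card_attach]
  · apply Subgroup.map_injective H.subtype_injective
    rw [MonoidHom.map_closure]
    have himg : H.subtype '' ((t.attach.map ⟨_, hinj⟩ : Finset ↥H) : Set ↥H)
        = (t : Set C) := by
      ext z
      simp [Subgroup.coe_subtype]
      exact fun hz => hsub z hz
    rw [himg, ht, ← MonoidHom.range_eq_map, H.range_subtype]

/-- If `H ≤ C` is generated (as a subgroup of `C`) by `t`, then `dGen ↥H ≤ t.card`. -/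
theorem dGen_subgroup_le_card {C : Type*} [Group C] {H : Subgroup C} {t : Finset C}
    (ht : Subgroup.closure (t : Set C) = H) : dGen ↥H ≤ t.card := by
  obtain ⟨t', ht'c, ht'⟩ := subgroup_gen_of_closure ht
  exact (dGen_le t' ht').trans ht'c

/-- Commutativity for quotients `V ⧸ W` when `⁅V,V⁆ ≤ W`. -/
theorem quot_mul_comm {P : Type*} [Group P] {V W : Subgroup P}
    [h : (W.subgroupOf V).Normal] (hVV : ⁅V, V⁆ ≤ W)
    (x y : V ⧸ W.subgroupOf V) : x * y = y * x := by
  induction x using QuotientGroup.induction_on with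
  | H a =>
  induction y using QuotientGroup.induction_on with
  | H b =>
  show QuotientGroup.mk (a * b) = QuotientGroup.mk (b * a)
  rw [QuotientGroup.eq]
  open scoped commutatorElement in
  have : (((a * b)⁻¹ * (b * a) : ↥V) : P) = ⁅(b : P)⁻¹, (a : P)⁻¹⁆ := by
    push_cast
    group
  rw [Subgroup.mem_subgroupOf, this]
  exact hVV (Subgroup.commutator_mem_commutator (inv_mem b.2) (inv_mem a.2))

/-- Extension bound: if `B ⧸ P` and `P` are generated by `s` and `t`, then `B` is generated
by `s.card + t.card` elements. -/
theorem dGen_extension_le {B : Type*} [Group B] (P : Subgroup B) [P.Normal]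
    (s : Finset (B ⧸ P)) (hs : Subgroup.closure (s : Set (B ⧸ P)) = ⊤)
    (t : Finset ↥P) (ht : Subgroup.closure (t : Set ↥P) = ⊤) :
    dGen B ≤ s.card + t.card := by
  classical
  set s' : Finset B := s.image Quotient.out with hs'
  set t' : Finset B := t.image Subtype.val with ht'd
  set Z := Subgroup.closure ((s' ∪ t' : Finset B) : Set B) with hZ
  have hPt : Subgroup.closure (t' : Set B) = P := by
    rw [ht'd, Finset.coe_image]
    have hv : (Subtype.val '' (t : Set ↥P)) = (P.subtype '' (t : Set ↥P)) := rfl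
    rw [hv, ← MonoidHom.map_closure, ht, ← MonoidHom.range_eq_map, P.range_subtype]
  have hPZ : P ≤ Z := by
    rw [← hPt]
    apply Subgroup.closure_mono
    intro x hx
    have := Finset.mem_coe.mp hx
    exact Finset.mem_coe.mpr (Finset.mem_union_right _ this)
  have hmapZ : Subgroup.map (QuotientGroup.mk' P) Z = ⊤ := by
    rw [eq_top_iff, ← hs, Subgroup.closure_le]
    intro q hq
    have hqout : q.out ∈ Z := by
      apply Subgroup.subset_closure
      exact Finset.mem_coe.mpr (Finset.mem_union_left _
        (Finset.mem_image_of_mem _ (Finset.mem_coe.mp hq)))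
    exact Subgroup.mem_map.mpr ⟨q.out, hqout, QuotientGroup.out_eq' q⟩
  have hZtop : Z = ⊤ := by
    rw [eq_top_iff]
    intro x _
    have hx : (QuotientGroup.mk x : B ⧸ P) ∈ Subgroup.map (QuotientGroup.mk' P) Z := by
      rw [hmapZ]; trivial
    obtain ⟨z, hz, hzx⟩ := Subgroup.mem_map.mp hx
    have hzx' : z⁻¹ * x ∈ P := by
      rw [← QuotientGroup.eq]
      exact hzx
    have : x = z * (z⁻¹ * x) := by group
    rw [this]
    exact mul_mem hz (hPZ hzx')
  calc dGen B ≤ (s' ∪ t').card := dGen_le _ hZtop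
    _ ≤ s'.card + t'.card := Finset.card_union_le _ _
    _ ≤ s.card + t.card := Nat.add_le_add (Finset.card_image_le) (Finset.card_image_le)

/-- If `B ⧸ P` and `P` are finitely generated then `dGen B ≤ dGen (B ⧸ P) + dGen ↥P`. -/
theorem dGen_quot_add {B : Type*} [Group B] (P : Subgroup B) [P.Normal]
    (h1 : ∃ s : Finset (B ⧸ P), Subgroup.closure (s : Set (B ⧸ P)) = ⊤)
    (h2 : ∃ t : Finset ↥P, Subgroup.closure (t : Set ↥P) = ⊤) :
    dGen B ≤ dGen (B ⧸ P) + dGen ↥P := by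
  obtain ⟨s, hscard, hs⟩ := exists_gen_finset _ h1
  obtain ⟨t, htcard, ht⟩ := exists_gen_finset _ h2
  calc dGen B ≤ s.card + t.card := dGen_extension_le P s hs t ht
    _ = dGen (B ⧸ P) + dGen ↥P := by rw [hscard, htcard]


/-- The main abstract inequality. Here `B = (ker π ⊓ X)/DR`, `C = (T ⊓ X)/DT` and
`A = (ker π ⊓ DT)/DR`. -/
theorem main_abstract {F G : Type} [Group F] [Group G] [Finite G] (π : F →* G)
    (T X DR DT : Subgroup F)
    (hRT : π.ker ≤ T) (hDRDT : DR ≤ DT) (hDTX : DT ≤ X)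
    (commB : ⁅π.ker ⊓ X, π.ker ⊓ X⁆ ≤ DR) (commC : ⁅T ⊓ X, T ⊓ X⁆ ≤ DT)
    [hDRnB : (DR.subgroupOf (π.ker ⊓ X)).Normal]
    [hDTnC : (DT.subgroupOf (T ⊓ X)).Normal]
    [hDRnA : (DR.subgroupOf (π.ker ⊓ DT)).Normal] :
    dGen ((π.ker ⊓ X : Subgroup F) ⧸ DR.subgroupOf (π.ker ⊓ X))
      ≤ dGen ((T ⊓ X : Subgroup F) ⧸ DT.subgroupOf (T ⊓ X))
        + dGen ((π.ker ⊓ DT : Subgroup F) ⧸ DR.subgroupOf (π.ker ⊓ DT)) := by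
  classical
  letI cB : CommGroup ((π.ker ⊓ X : Subgroup F) ⧸ DR.subgroupOf (π.ker ⊓ X)) :=
    { (inferInstance : Group ((π.ker ⊓ X : Subgroup F) ⧸ DR.subgroupOf (π.ker ⊓ X))) with
      mul_comm := quot_mul_comm commB }
  letI cC : CommGroup ((T ⊓ X : Subgroup F) ⧸ DT.subgroupOf (T ⊓ X)) :=
    { (inferInstance : Group ((T ⊓ X : Subgroup F) ⧸ DT.subgroupOf (T ⊓ X))) with
      mul_comm := quot_mul_comm commC }
  by_cases hfg : ∃ s : Finset ((π.ker ⊓ X : Subgroup F) ⧸ DR.subgroupOf (π.ker ⊓ X)),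
      Subgroup.closure (s : Set ((π.ker ⊓ X : Subgroup F) ⧸ DR.subgroupOf (π.ker ⊓ X))) = ⊤
  swap
  · rw [dGen_eq_zero_of_no_gen hfg]
    exact Nat.zero_le _
  obtain ⟨sB, hsB⟩ := hfg
  have hVBC : π.ker ⊓ X ≤ T ⊓ X := inf_le_inf_right X hRT
  have hVAB : π.ker ⊓ DT ≤ π.ker ⊓ X := inf_le_inf_left _ hDTX
  have hfcond : DR.subgroupOf (π.ker ⊓ X) ≤
      (DT.subgroupOf (T ⊓ X)).comap (Subgroup.inclusion hVBC) := by
    intro x hx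
    rw [Subgroup.mem_subgroupOf] at hx
    rw [Subgroup.mem_comap, Subgroup.mem_subgroupOf, Subgroup.coe_inclusion]
    exact hDRDT hx
  set f := QuotientGroup.map (DR.subgroupOf (π.ker ⊓ X)) (DT.subgroupOf (T ⊓ X))
    (Subgroup.inclusion hVBC) hfcond with hfdef
  have hgcond : DR.subgroupOf (π.ker ⊓ DT) ≤
      (DR.subgroupOf (π.ker ⊓ X)).comap (Subgroup.inclusion hVAB) := by
    intro x hx
    rw [Subgroup.mem_subgroupOf] at hx
    rw [Subgroup.mem_comap, Subgroup.mem_subgroupOf, Subgroup.coe_inclusion]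
    exact hx
  set g := QuotientGroup.map (DR.subgroupOf (π.ker ⊓ DT)) (DR.subgroupOf (π.ker ⊓ X))
    (Subgroup.inclusion hVAB) hgcond with hgdef
  have hginj : Function.Injective g := by
    rw [← MonoidHom.ker_eq_bot_iff, eq_bot_iff]
    intro x hx
    induction x using QuotientGroup.induction_on with
    | H a =>
    have hga : g (QuotientGroup.mk a) = 1 := hx
    rw [hgdef, QuotientGroup.map_mk, QuotientGroup.eq_one_iff, Subgroup.mem_subgroupOf,
      Subgroup.coe_inclusion] at hga
    rw [Subgroup.mem_bot, QuotientGroup.eq_one_iff, Subgroup.mem_subgroupOf]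
    exact hga
  have hrange : g.range = f.ker := by
    ext b
    induction b using QuotientGroup.induction_on with
    | H x =>
    constructor
    · rintro ⟨a, ha⟩
      rw [MonoidHom.mem_ker, ← ha]
      induction a using QuotientGroup.induction_on with
      | H y =>
      rw [hgdef, QuotientGroup.map_mk, hfdef, QuotientGroup.map_mk, QuotientGroup.eq_one_iff,
        Subgroup.mem_subgroupOf, Subgroup.coe_inclusion, Subgroup.coe_inclusion]
      exact (Subgroup.mem_inf.mp y.2).2
    · intro hb
      rw [MonoidHom.mem_ker, hfdef, QuotientGroup.map_mk, QuotientGroup.eq_one_iff,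
        Subgroup.mem_subgroupOf, Subgroup.coe_inclusion] at hb
      refine ⟨QuotientGroup.mk (⟨(x : F), Subgroup.mem_inf.mpr
        ⟨(Subgroup.mem_inf.mp x.2).1, hb⟩⟩ : ↥(π.ker ⊓ DT)), ?_⟩
      rw [hgdef, QuotientGroup.map_mk]
      apply congrArg
      exact Subtype.ext rfl
  -- `f.ker` is finitely generated
  obtain ⟨tk, htkcard, htk⟩ := exists_finset_closure_eq_of_le_closure sB f.ker
    (by rw [hsB]; exact le_top)
  obtain ⟨tk', htk'c, htk'⟩ := subgroup_gen_of_closure htk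
  -- the image of `f` is the closure of the image of `sB`
  have hHgen : Subgroup.closure ((sB.image f : Finset _) :
      Set ((T ⊓ X : Subgroup F) ⧸ DT.subgroupOf (T ⊓ X))) = f.range := by
    rw [Finset.coe_image, ← MonoidHom.map_closure, hsB, ← MonoidHom.range_eq_map]
  -- `C ⧸ f.range` is finite
  haveI hRangeNormal : (f.range).Normal := Subgroup.normal_of_comm _
  set ψ : ↥(T ⊓ X) →* G := π.comp (T ⊓ X).subtype with hψdef
  have hφfact : ∀ y : ↥(T ⊓ X), y ∈ ψ.ker →
      ((QuotientGroup.mk' f.range).comp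
        (QuotientGroup.mk' (DT.subgroupOf (T ⊓ X)))) y = 1 := by
    intro y hy
    have hyk : (y : F) ∈ π.ker := by
      rw [MonoidHom.mem_ker] at hy ⊢
      exact hy
    have hyB : (y : F) ∈ π.ker ⊓ X :=
      Subgroup.mem_inf.mpr ⟨hyk, (Subgroup.mem_inf.mp y.2).2⟩
    rw [MonoidHom.comp_apply, QuotientGroup.mk'_apply, QuotientGroup.mk'_apply,
      QuotientGroup.eq_one_iff]
    refine ⟨QuotientGroup.mk (⟨(y : F), hyB⟩ : ↥(π.ker ⊓ X)), ?_⟩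
    rw [hfdef, QuotientGroup.map_mk]
    apply congrArg
    exact Subtype.ext rfl
  set φ' := QuotientGroup.lift ψ.ker ((QuotientGroup.mk' f.range).comp
    (QuotientGroup.mk' (DT.subgroupOf (T ⊓ X)))) hφfact with hφ'def
  have hφ'surj : Function.Surjective φ' := by
    intro q
    induction q using QuotientGroup.induction_on with
    | H cb =>
    induction cb using QuotientGroup.induction_on with
    | H y =>
    exact ⟨QuotientGroup.mk y, rfl⟩
  haveI : Finite (↥(T ⊓ X) ⧸ ψ.ker) :=
    Finite.of_injective _ (QuotientGroup.kerLift_injective ψ)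
  haveI hfinCH : Finite ((((T ⊓ X : Subgroup F) ⧸ DT.subgroupOf (T ⊓ X))) ⧸ f.range) :=
    Finite.of_surjective φ' hφ'surj
  haveI := Fintype.ofFinite ((((T ⊓ X : Subgroup F) ⧸ DT.subgroupOf (T ⊓ X))) ⧸ f.range)
  set reps : Finset ((T ⊓ X : Subgroup F) ⧸ DT.subgroupOf (T ⊓ X)) :=
    Finset.univ.image (fun q : (((T ⊓ X : Subgroup F) ⧸ DT.subgroupOf (T ⊓ X))) ⧸ f.range =>
      q.out) with hreps
  have hCgen : Subgroup.closure ((sB.image f ∪ reps : Finset _) :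
      Set ((T ⊓ X : Subgroup F) ⧸ DT.subgroupOf (T ⊓ X))) = ⊤ := by
    rw [eq_top_iff]
    intro x _
    set q := (QuotientGroup.mk x : (((T ⊓ X : Subgroup F) ⧸ DT.subgroupOf (T ⊓ X))) ⧸ f.range)
      with hq
    have hout : (QuotientGroup.mk q.out :
        (((T ⊓ X : Subgroup F) ⧸ DT.subgroupOf (T ⊓ X))) ⧸ f.range) = QuotientGroup.mk x :=
      QuotientGroup.out_eq' q
    have hrmem : q.out ∈ Subgroup.closure ((sB.image f ∪ reps : Finset _) : Set _) :=
      Subgroup.subset_closure (Finset.mem_coe.mpr (Finset.mem_union_right _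
        (Finset.mem_image_of_mem _ (Finset.mem_univ q))))
    have hr2 : q.out⁻¹ * x ∈ f.range := by
      rw [← QuotientGroup.eq]
      exact hout
    have hr2' : q.out⁻¹ * x ∈ Subgroup.closure ((sB.image f ∪ reps : Finset _) : Set _) := by
      have hle : f.range ≤ Subgroup.closure ((sB.image f ∪ reps : Finset _) : Set _) := by
        rw [← hHgen]
        apply Subgroup.closure_mono
        intro z hz
        exact Finset.mem_coe.mpr (Finset.mem_union_left _ (Finset.mem_coe.mp hz))
      exact hle hr2
    have hxx : x = q.out * (q.out⁻¹ * x) := by group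
    rw [hxx]
    exact mul_mem hrmem hr2'
  have h4 : dGen ↥f.range ≤ dGen ((T ⊓ X : Subgroup F) ⧸ DT.subgroupOf (T ⊓ X)) := by
    obtain ⟨sC, hsCcard, hsC⟩ := exists_gen_finset _ ⟨_, hCgen⟩
    obtain ⟨t, htc, htt⟩ := exists_finset_closure_eq_of_le_closure sC f.range
      (by rw [hsC]; exact le_top)
    calc dGen ↥f.range ≤ t.card := dGen_subgroup_le_card htt
      _ ≤ sC.card := htc
      _ = dGen ((T ⊓ X : Subgroup F) ⧸ DT.subgroupOf (T ⊓ X)) := hsCcard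
  have h2 : dGen ↥f.ker
      = dGen ((π.ker ⊓ DT : Subgroup F) ⧸ DR.subgroupOf (π.ker ⊓ DT)) := by
    rw [← hrange]
    exact (dGen_eq_of_mulEquiv (MonoidHom.ofInjective hginj)).symm
  have h3 : dGen (((π.ker ⊓ X : Subgroup F) ⧸ DR.subgroupOf (π.ker ⊓ X)) ⧸ f.ker)
      = dGen ↥f.range :=
    dGen_eq_of_mulEquiv (QuotientGroup.quotientKerEquivRange f)
  calc dGen ((π.ker ⊓ X : Subgroup F) ⧸ DR.subgroupOf (π.ker ⊓ X))
      ≤ dGen ((((π.ker ⊓ X : Subgroup F) ⧸ DR.subgroupOf (π.ker ⊓ X))) ⧸ f.ker)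
        + dGen ↥f.ker :=
        dGen_quot_add f.ker ⟨sB.image (QuotientGroup.mk' f.ker),
          closure_image_top (QuotientGroup.mk' f.ker) (QuotientGroup.mk'_surjective _) sB hsB⟩
          ⟨tk', htk'⟩
    _ = dGen ↥f.range
        + dGen ((π.ker ⊓ DT : Subgroup F) ⧸ DR.subgroupOf (π.ker ⊓ DT)) := by rw [h3, h2]
    _ ≤ dGen ((T ⊓ X : Subgroup F) ⧸ DT.subgroupOf (T ⊓ X))
        + dGen ((π.ker ⊓ DT : Subgroup F) ⧸ DR.subgroupOf (π.ker ⊓ DT)) :=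
        Nat.add_le_add_right h4 _

/-- Let `(G,N)` be a pair of finite groups, `K` a normal subgroup of `G` contained in `N`, and
`π : F ↠ G` a free presentation.  Then
`d(M^{(c)}(G,N)) ≤ d(M^{(c)}(G/K, N/K)) + d(M^{(c)}(G,K))`, where `d(X)` is the minimal number
of generators of `X`. -/
theorem dGen_multiplier_le_of_normal {G : Type} [Group G] [Finite G]
    {F : Type} [Group F] [IsFreeGroup F] (π : F →* G) (hπ : Function.Surjective π)
    (N K : Subgroup G) [N.Normal] [K.Normal] (hKN : K ≤ N) (c : ℕ) (hc : 1 ≤ c) :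
    dGen (McPair π N c) ≤ dGen (McPairQuot π N K c) + dGen (McPairSub π K c) := by
  have hRT : π.ker ≤ K.comap π := by
    intro x hx
    rw [MonoidHom.mem_ker] at hx
    rw [Subgroup.mem_comap, hx]
    exact one_mem K
  have commB : ⁅π.ker ⊓ itComm (N.comap π) ⊤ c, π.ker ⊓ itComm (N.comap π) ⊤ c⁆
      ≤ itComm π.ker ⊤ c := by
    have h0 : ⁅π.ker ⊓ itComm (N.comap π) ⊤ c, π.ker ⊓ itComm (N.comap π) ⊤ c⁆
        ≤ ⁅itComm π.ker ⊤ 0, itComm (N.comap π) ⊤ c⁆ :=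
      Subgroup.commutator_mono inf_le_left inf_le_right
    refine h0.trans ?_
    simpa using itComm_commutator_le π.ker (N.comap π) c 0
  have commC : ⁅K.comap π ⊓ itComm (N.comap π) ⊤ c, K.comap π ⊓ itComm (N.comap π) ⊤ c⁆
      ≤ itComm (K.comap π) ⊤ c := by
    have h0 : ⁅K.comap π ⊓ itComm (N.comap π) ⊤ c, K.comap π ⊓ itComm (N.comap π) ⊤ c⁆
        ≤ ⁅itComm (K.comap π) ⊤ 0, itComm (N.comap π) ⊤ c⁆ :=
      Subgroup.commutator_mono inf_le_left inf_le_right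
    refine h0.trans ?_
    simpa using itComm_commutator_le (K.comap π) (N.comap π) c 0
  exact main_abstract π (K.comap π) (itComm (N.comap π) ⊤ c) (itComm π.ker ⊤ c)
    (itComm (K.comap π) ⊤ c) hRT (itComm_mono hRT c) (itComm_mono (Subgroup.comap_mono hKN) c)
    commB commC
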